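/- Let p ≥ 1, let S, Q ∈ ℝ^{p×p} be symmetric, let λ > 0, let Ψ* ∈ ℝ^{p×p} with support U, let Ψ̂ be any global minimizer of the penalized loss f, and set Δ̂ = Ψ̂ − Ψ*. If 2‖SΨ*S − Q‖_∞ < λ/2, then 2·tr(Δ̂SΔ̂S) + λ‖Ψ̂_U − Ψ*_U‖₁ + λ‖Ψ̂_{U^c}‖₁ ≤ 4λ‖Ψ̂_U − Ψ*_U‖₁. (Lemma 2) -/

import Mathlib

set_option maxHeartbeats 1000000

open Matrix

/-- Entrywise ℓ1 norm of a matrix: `‖A‖₁ = ∑_{i,j} |A_{ij}|`. -/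
noncomputable def entryL1 {p : ℕ} (A : Matrix (Fin p) (Fin p) ℝ) : ℝ :=
  ∑ i, ∑ j, |A i j|

/-- Entrywise max norm of a matrix: `‖A‖_∞ = max_{i,j} |A_{ij}|`. -/
noncomputable def entryMax {p : ℕ} (A : Matrix (Fin p) (Fin p) ℝ) : ℝ :=
  ⨆ ij : Fin p × Fin p, |A ij.1 ij.2|

/-- `A_U`: the matrix agreeing with `A` on the support `U = {(i,j) : Ψ*_{ij} ≠ 0}` of `Ψstar`,
and zero elsewhere. -/
noncomputable def onSupp {p : ℕ} (Ψstar A : Matrix (Fin p) (Fin p) ℝ) : Matrix (Fin p) (Fin p) ℝ :=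
  fun i j => if Ψstar i j ≠ 0 then A i j else 0

/-- `A_{U^c} = A - A_U`. -/
noncomputable def offSupp {p : ℕ} (Ψstar A : Matrix (Fin p) (Fin p) ℝ) : Matrix (Fin p) (Fin p) ℝ :=
  A - onSupp Ψstar A

/-- The penalized loss `f(Ψ) = tr(ΨᵀSΨS)/2 − tr(ΨQ) + λ‖Ψ‖₁`. -/
noncomputable def penLoss {p : ℕ} (S Q : Matrix (Fin p) (Fin p) ℝ) (lam : ℝ)
    (Ψ : Matrix (Fin p) (Fin p) ℝ) : ℝ :=
  (Ψᵀ * S * Ψ * S).trace / 2 - (Ψ * Q).trace + lam * entryL1 Ψ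

lemma entryL1_nonneg {p : ℕ} (A : Matrix (Fin p) (Fin p) ℝ) : 0 ≤ entryL1 A :=
  Finset.sum_nonneg fun _ _ => Finset.sum_nonneg fun _ _ => abs_nonneg _

lemma entryL1_add_le {p : ℕ} (A B : Matrix (Fin p) (Fin p) ℝ) :
    entryL1 (A + B) ≤ entryL1 A + entryL1 B := by
  unfold entryL1
  rw [← Finset.sum_add_distrib]
  refine Finset.sum_le_sum fun i _ => ?_
  rw [← Finset.sum_add_distrib]
  exact Finset.sum_le_sum fun j _ => abs_add_le _ _

lemma entryL1_smul {p : ℕ} (c : ℝ) (A : Matrix (Fin p) (Fin p) ℝ) :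
    entryL1 (c • A) = |c| * entryL1 A := by
  unfold entryL1
  simp [Finset.mul_sum, abs_mul]

lemma trace_bilin_symm {p : ℕ} {S : Matrix (Fin p) (Fin p) ℝ} (hS : Sᵀ = S)
    (A B : Matrix (Fin p) (Fin p) ℝ) :
    (Aᵀ * S * B * S).trace = (Bᵀ * S * A * S).trace := by
  calc (Aᵀ * S * B * S).trace = ((Aᵀ * S * B * S)ᵀ).trace := (trace_transpose _).symm
    _ = (S * (Bᵀ * S * A)).trace := by
        simp [Matrix.transpose_mul, hS, Matrix.mul_assoc]
    _ = (Bᵀ * S * A * S).trace := by rw [Matrix.trace_mul_comm]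

lemma penLoss_add_smul {p : ℕ} {S Q : Matrix (Fin p) (Fin p) ℝ} {lam : ℝ}
    (hS : Sᵀ = S) (A B : Matrix (Fin p) (Fin p) ℝ) (t : ℝ) :
    penLoss S Q lam (A + t • B) = penLoss S Q lam A
      + t * ((Bᵀ * S * A * S).trace - (B * Q).trace)
      + t ^ 2 * (Bᵀ * S * B * S).trace / 2
      + lam * (entryL1 (A + t • B) - entryL1 A) := by
  unfold penLoss
  simp only [Matrix.add_mul, Matrix.mul_add, Matrix.transpose_add, Matrix.transpose_smul,
    Matrix.smul_mul, Matrix.mul_smul, Matrix.trace_add, Matrix.trace_smul, smul_eq_mul,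
    smul_smul]
  rw [trace_bilin_symm hS A B]
  ring

/-- **Lemma 2.** -/
theorem lemma2 {p : ℕ} (hp : 1 ≤ p) (S Q : Matrix (Fin p) (Fin p) ℝ)
    (hS : S.IsSymm) (hQ : Q.IsSymm) (lam : ℝ) (hlam : 0 < lam)
    (Ψstar Ψhat : Matrix (Fin p) (Fin p) ℝ)
    (hmin : ∀ Ψ : Matrix (Fin p) (Fin p) ℝ, penLoss S Q lam Ψhat ≤ penLoss S Q lam Ψ)
    (htune : 2 * entryMax (S * Ψstar * S - Q) < lam / 2) :
    2 * ((Ψhat - Ψstar) * S * (Ψhat - Ψstar) * S).trace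
        + lam * entryL1 (onSupp Ψstar Ψhat - onSupp Ψstar Ψstar)
        + lam * entryL1 (offSupp Ψstar Ψhat) ≤
      4 * lam * entryL1 (onSupp Ψstar Ψhat - onSupp Ψstar Ψstar) := by
  have hS' : Sᵀ = S := hS
  have hQ' : Qᵀ = Q := hQ
  set Δ : Matrix (Fin p) (Fin p) ℝ := Ψhat - Ψstar with hΔ
  set G : Matrix (Fin p) (Fin p) ℝ := S * Ψstar * S - Q with hG
  set a : ℝ := entryL1 (onSupp Ψstar Ψhat - onSupp Ψstar Ψstar) with ha
  set b : ℝ := entryL1 (offSupp Ψstar Ψhat) with hb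
  have ha0 : 0 ≤ a := entryL1_nonneg _
  have hb0 : 0 ≤ b := entryL1_nonneg _
  -- q(M) ≥ 0 for all M
  have qnonneg : ∀ M : Matrix (Fin p) (Fin p) ℝ, 0 ≤ (Mᵀ * S * M * S).trace := by
    intro M
    by_contra hneg
    push_neg at hneg
    set q : ℝ := (Mᵀ * S * M * S).trace with hq
    set K : ℝ := ((Mᵀ * S * Ψhat * S).trace - (M * Q).trace) + lam * entryL1 M with hK
    have hstep : ∀ t : ℝ, 0 < t → 0 ≤ K + t * q / 2 := by
      intro t ht
      have h1 := hmin (Ψhat + t • M)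
      rw [penLoss_add_smul hS' Ψhat M t] at h1
      have hpen : entryL1 (Ψhat + t • M) - entryL1 Ψhat ≤ t * entryL1 M := by
        have := entryL1_add_le Ψhat (t • M)
        rw [entryL1_smul] at this
        rw [abs_of_pos ht] at this
        linarith
      have h2 : 0 ≤ t * ((Mᵀ * S * Ψhat * S).trace - (M * Q).trace) + t ^ 2 * q / 2
          + lam * (t * entryL1 M) := by
        nlinarith [mul_le_mul_of_nonneg_left hpen hlam.le]
      have h3 : 0 ≤ t * (K + t * q / 2) := by rw [hK]; ring_nf; ring_nf at h2; linarith
      nlinarith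
    have hqpos : 0 < -q := by linarith
    have h4 := hstep (2 * (|K| + 1) / (-q)) (div_pos (by positivity) hqpos)
    have h5 : (2 * (|K| + 1) / (-q)) * q / 2 = -(|K| + 1) := by
      have hq0 : q ≠ 0 := ne_of_lt hneg
      field_simp
    rw [h5] at h4
    have := abs_nonneg K
    have := le_abs_self K
    linarith
  -- key first-order inequality
  have key : (Δᵀ * S * Δ * S).trace + (Δᵀ * G).trace
      + lam * (entryL1 Ψhat - entryL1 Ψstar) ≤ 0 := by
    set u : ℝ := (Δᵀ * S * Δ * S).trace with hu
    have hu0 : 0 ≤ u := qnonneg Δ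
    set c : ℝ := ((Δᵀ * S * Ψhat * S).trace - (Δ * Q).trace)
        + lam * (entryL1 Ψhat - entryL1 Ψstar) with hc
    have hstep : ∀ t : ℝ, 0 < t → t ≤ 1 → c ≤ t * u / 2 := by
      intro t ht ht1
      have h1 := hmin (Ψhat + t • (-Δ))
      rw [penLoss_add_smul hS' Ψhat (-Δ) t] at h1
      have hconv : entryL1 (Ψhat + t • (-Δ)) ≤ entryL1 Ψhat + t * (entryL1 Ψstar - entryL1 Ψhat) := by
        have hid : Ψhat + t • (-Δ) = (1 - t) • Ψhat + t • Ψstar := by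
          rw [hΔ]; module
        rw [hid]
        calc entryL1 ((1 - t) • Ψhat + t • Ψstar)
            ≤ entryL1 ((1 - t) • Ψhat) + entryL1 (t • Ψstar) := entryL1_add_le _ _
          _ = (1 - t) * entryL1 Ψhat + t * entryL1 Ψstar := by
              rw [entryL1_smul, entryL1_smul, abs_of_nonneg (by linarith), abs_of_pos ht]
          _ = entryL1 Ψhat + t * (entryL1 Ψstar - entryL1 Ψhat) := by ring
      have htr1 : ((-Δ)ᵀ * S * Ψhat * S).trace = -(Δᵀ * S * Ψhat * S).trace := by
        simp [Matrix.transpose_neg, Matrix.neg_mul]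
      have htr2 : ((-Δ) * Q).trace = -(Δ * Q).trace := by
        simp [Matrix.neg_mul]
      have htr3 : ((-Δ)ᵀ * S * (-Δ) * S).trace = u := by
        rw [hu]; simp [Matrix.transpose_neg, Matrix.neg_mul, Matrix.mul_neg]
      rw [htr1, htr2, htr3] at h1
      have : 0 ≤ t * (-((Δᵀ * S * Ψhat * S).trace - (Δ * Q).trace)) + t ^ 2 * u / 2
          + lam * (t * (entryL1 Ψstar - entryL1 Ψhat)) := by
        nlinarith [mul_le_mul_of_nonneg_left (sub_le_sub_right hconv (entryL1 Ψhat)) hlam.le]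
      have h3 : 0 ≤ t * (-c + t * u / 2) := by rw [hc]; ring_nf; ring_nf at this; linarith
      nlinarith
    have hc0 : c ≤ 0 := by
      by_contra hcpos
      push_neg at hcpos
      have ht : min 1 (c / (u + 1)) > 0 := by
        apply lt_min one_pos
        positivity
      have := hstep _ ht (min_le_left _ _)
      have h6 : (min 1 (c / (u + 1))) * u / 2 < c := by
        have h7 : min 1 (c / (u + 1)) ≤ c / (u + 1) := min_le_right _ _
        have h8 : (c / (u + 1)) * u / 2 < c := by
          rw [div_mul_eq_mul_div, div_div]
          rw [div_lt_iff₀ (by linarith)]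
          nlinarith
        have h9 : (min 1 (c / (u + 1))) * u / 2 ≤ (c / (u + 1)) * u / 2 := by
          have := mul_le_mul_of_nonneg_right h7 hu0
          linarith
        linarith
      linarith
    -- rewrite c
    have hexp : (Δᵀ * S * Ψhat * S).trace = (Δᵀ * S * Ψstar * S).trace + u := by
      have : Ψhat = Ψstar + Δ := by rw [hΔ]; abel
      rw [hu, this]
      simp [Matrix.mul_add, Matrix.add_mul, Matrix.trace_add]
    have hQtr : (Δ * Q).trace = (Δᵀ * Q).trace := by
      calc (Δ * Q).trace = ((Δ * Q)ᵀ).trace := (trace_transpose _).symm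
        _ = (Qᵀ * Δᵀ).trace := by rw [Matrix.transpose_mul]
        _ = (Δᵀ * Q).trace := by rw [hQ', Matrix.trace_mul_comm]
    have hGtr : (Δᵀ * G).trace = (Δᵀ * S * Ψstar * S).trace - (Δᵀ * Q).trace := by
      rw [hG, Matrix.mul_sub, Matrix.trace_sub]
      simp [Matrix.mul_assoc]
    rw [hc, hexp, hQtr] at hc0
    rw [hGtr]
    linarith
  -- trace comparison: tr(ΔSΔS) ≤ tr(ΔᵀSΔS)
  have TleT' : (Δ * S * Δ * S).trace ≤ (Δᵀ * S * Δ * S).trace := by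
    have h0 := qnonneg (Δ - Δᵀ)
    have hexp : ((Δ - Δᵀ)ᵀ * S * (Δ - Δᵀ) * S).trace
        = (Δᵀ * S * Δ * S).trace - (Δᵀ * S * Δᵀ * S).trace
          - (Δ * S * Δ * S).trace + (Δ * S * Δᵀ * S).trace := by
      simp [Matrix.transpose_sub, Matrix.sub_mul, Matrix.mul_sub, Matrix.trace_sub]
      ring
    have h1 : (Δᵀ * S * Δᵀ * S).trace = (Δ * S * Δ * S).trace := by
      have := trace_bilin_symm hS' Δ Δᵀ
      simpa using this
    have h2 : (Δ * S * Δᵀ * S).trace = (Δᵀ * S * Δ * S).trace := by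
      calc (Δ * S * Δᵀ * S).trace = ((Δ * S * Δᵀ * S)ᵀ).trace := (trace_transpose _).symm
        _ = ((S * Δ * S) * Δᵀ).trace := by
            simp [Matrix.transpose_mul, hS', Matrix.mul_assoc]
        _ = (Δᵀ * (S * Δ * S)).trace := Matrix.trace_mul_comm _ _
        _ = (Δᵀ * S * Δ * S).trace := by simp [Matrix.mul_assoc]
    rw [hexp, h1, h2] at h0
    linarith
  -- bound on the linear term
  have hM : ∀ i j, |G i j| ≤ entryMax G := by
    intro i j
    unfold entryMax
    exact le_ciSup (f := fun ij : Fin p × Fin p => |G ij.1 ij.2|)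
      (Set.Finite.bddAbove (Set.finite_range _)) (⟨i, j⟩ : Fin p × Fin p)
  have htrG : (Δᵀ * G).trace = ∑ i, ∑ j, Δ j i * G j i := by
    simp [Matrix.trace, Matrix.diag, Matrix.mul_apply, Matrix.transpose_apply]
  have habD : entryL1 Δ = a + b := by
    rw [ha, hb]
    unfold entryL1
    rw [← Finset.sum_add_distrib]
    refine Finset.sum_congr rfl fun i _ => ?_
    rw [← Finset.sum_add_distrib]
    refine Finset.sum_congr rfl fun j _ => ?_
    by_cases h : Ψstar i j = 0 <;>
      simp [onSupp, offSupp, hΔ, Matrix.sub_apply, h]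
  have hinner : -(Δᵀ * G).trace ≤ entryMax G * (a + b) := by
    rw [← habD, htrG]
    calc -(∑ i, ∑ j, Δ j i * G j i) ≤ |∑ i, ∑ j, Δ j i * G j i| := neg_le_abs _
      _ ≤ ∑ i, ∑ j, |Δ j i * G j i| := by
          refine (Finset.abs_sum_le_sum_abs _ _).trans ?_
          exact Finset.sum_le_sum fun i _ => Finset.abs_sum_le_sum_abs _ _
      _ ≤ ∑ i, ∑ j, entryMax G * |Δ j i| := by
          refine Finset.sum_le_sum fun i _ => Finset.sum_le_sum fun j _ => ?_
          rw [abs_mul, mul_comm]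
          exact mul_le_mul_of_nonneg_right (hM j i) (abs_nonneg _)
      _ = entryMax G * entryL1 Δ := by
          unfold entryL1
          rw [Finset.mul_sum]
          rw [Finset.sum_comm]
          exact Finset.sum_congr rfl fun i _ => by rw [Finset.mul_sum]
  -- penalty decomposition
  have hpen : entryL1 Ψstar - entryL1 Ψhat ≤ a - b := by
    rw [ha, hb]
    unfold entryL1
    have : ∀ i j : Fin p, |Ψstar i j| - |Ψhat i j|
        ≤ |(onSupp Ψstar Ψhat - onSupp Ψstar Ψstar) i j| - |offSupp Ψstar Ψhat i j| := by
      intro i j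
      by_cases h : Ψstar i j = 0
      · simp [onSupp, offSupp, Matrix.sub_apply, h]
      · simp only [onSupp, offSupp, Matrix.sub_apply, h, ne_eq, not_false_eq_true, if_true]
        simp only [sub_self, abs_zero, sub_zero]
        have := abs_sub_abs_le_abs_sub (Ψstar i j) (Ψhat i j)
        rw [abs_sub_comm] at this
        linarith
    calc (∑ i, ∑ j, |Ψstar i j|) - ∑ i, ∑ j, |Ψhat i j|
        = ∑ i, ∑ j, (|Ψstar i j| - |Ψhat i j|) := by
          rw [← Finset.sum_sub_distrib]
          exact Finset.sum_congr rfl fun i _ => (Finset.sum_sub_distrib _ _).symm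
      _ ≤ ∑ i, ∑ j, (|(onSupp Ψstar Ψhat - onSupp Ψstar Ψstar) i j| - |offSupp Ψstar Ψhat i j|) :=
          Finset.sum_le_sum fun i _ => Finset.sum_le_sum fun j _ => this i j
      _ = (∑ i, ∑ j, |(onSupp Ψstar Ψhat - onSupp Ψstar Ψstar) i j|)
            - ∑ i, ∑ j, |offSupp Ψstar Ψhat i j| := by
          rw [← Finset.sum_sub_distrib]
          exact Finset.sum_congr rfl fun i _ => Finset.sum_sub_distrib _ _
  -- assemble
  have hmax : entryMax G < lam / 4 := by linarith
  have hub : (Δᵀ * S * Δ * S).trace ≤ (lam / 4) * (a + b) + lam * (a - b) := by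
    have h1 : (Δᵀ * S * Δ * S).trace ≤ -(Δᵀ * G).trace + lam * (entryL1 Ψstar - entryL1 Ψhat) := by
      nlinarith [key]
    have h2 : entryMax G * (a + b) ≤ (lam / 4) * (a + b) :=
      mul_le_mul_of_nonneg_right hmax.le (by linarith)
    have h3 : lam * (entryL1 Ψstar - entryL1 Ψhat) ≤ lam * (a - b) :=
      mul_le_mul_of_nonneg_left hpen hlam.le
    linarith
  have hva : 0 ≤ lam * a := mul_nonneg hlam.le ha0
  have hvb : 0 ≤ lam * b := mul_nonneg hlam.le hb0
  nlinarith [TleT', hub]
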